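/- arXiv:2401.07521 — 2 statements merged into one kernel-verified Lean document; each statement's English description precedes it below -/
import Mathlib

section
/- Error decomposition for classification–restoration prediction (Lemma 1): Under the data model and estimator model below, with the hypothesis that for every x ∈ 𝒳 one has Σ_{m=1}^M p_m(x) v_m(x) = ∫ y dν_x(y), the mean squared prediction error decomposes exactly as E[(ŷ − y)²] = V_p + V_w + V_b + V_y, where the expectation is over the product measure (Σ_x q(x) δ_x ⊗ ν_x) ⊗ 𝒫_p ⊗ 𝒫_w, and V_p = E[(Σ_{m=1}^M (p̂_m(x) − p_m(x)) ŵ_m)²], V_w = E[(Σ_{m=1}^M p_m(x)(ŵ_m − w_m))²], V_b = E_x[(Σ_{m=1}^M p_m(x)(w_m − v_m(x)))²], V_y = E_{(x,y)}[(Σ_{m=1}^M p_m(x) v_m(x) − y)²]. -/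
open MeasureTheory

private lemma mul_int {α : Type*} {m : MeasurableSpace α} {μ : Measure α}
    {f g : α → ℝ} (hf : MemLp f 2 μ) (hg : MemLp g 2 μ) :
    Integrable (fun a => f a * g a) μ := by
  have h1 := (hf.add hg).integrable_sq
  have h2 := hf.integrable_sq
  have h3 := hg.integrable_sq
  have heq : (fun a => f a * g a)
      = fun a => (((f a + g a) ^ 2 - f a ^ 2) - g a ^ 2) / 2 := by
    funext a; ring
  rw [heq]
  exact ((h1.sub h2).sub h3).div_const 2

private lemma sum_sq_int {α : Type*} {m : MeasurableSpace α} {μ : Measure α}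
    (s : Finset ℕ) (f : ℕ → α → ℝ) (hf : ∀ m ∈ s, MemLp (f m) 2 μ) :
    ∫ a, (∑ m ∈ s, f m a) ^ 2 ∂μ = ∑ m ∈ s, ∑ n ∈ s, ∫ a, f m a * f n a ∂μ := by
  have key : ∀ a, (∑ m ∈ s, f m a) ^ 2 = ∑ m ∈ s, ∑ n ∈ s, f m a * f n a := by
    intro a; rw [sq, Finset.sum_mul_sum]
  simp_rw [key]
  rw [integral_finset_sum s (fun m hm =>
    integrable_finset_sum s (fun n hn => mul_int (hf m hm) (hf n hn)))]
  exact Finset.sum_congr rfl fun m hm =>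
    integral_finset_sum s (fun n hn => mul_int (hf m hm) (hf n hn))

/-- expansion of `∫ ((∑ c m * g m) - y)^2` over a probability measure. -/
private lemma expand_sq_int {α : Type*} {mα : MeasurableSpace α} (μ : Measure α)
    [IsProbabilityMeasure μ] (s : Finset ℕ) (g : ℕ → α → ℝ)
    (hg : ∀ m ∈ s, MemLp (g m) 2 μ) (c : ℕ → ℝ) (y : ℝ) :
    ∫ a, ((∑ m ∈ s, c m * g m a) - y) ^ 2 ∂μ
      = (∑ m ∈ s, ∑ n ∈ s, c m * c n * ∫ a, g m a * g n a ∂μ)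
        - 2 * y * (∑ m ∈ s, c m * ∫ a, g m a ∂μ) + y ^ 2 := by
  have hgm : ∀ m ∈ s, MemLp (fun a => c m * g m a) 2 μ :=
    fun m hm => (hg m hm).const_mul (c m)
  have hS : MemLp (fun a => ∑ m ∈ s, c m * g m a) 2 μ := memLp_finset_sum s hgm
  have hS2 : Integrable (fun a => (∑ m ∈ s, c m * g m a) ^ 2) μ := hS.integrable_sq
  have hS1 : Integrable (fun a => ∑ m ∈ s, c m * g m a) μ := hS.integrable one_le_two
  have key : ∀ a, ((∑ m ∈ s, c m * g m a) - y) ^ 2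
      = (∑ m ∈ s, c m * g m a) ^ 2 - 2 * y * (∑ m ∈ s, c m * g m a) + y ^ 2 :=
    fun a => by ring
  have hA : Integrable (fun a =>
      (∑ m ∈ s, c m * g m a) ^ 2 - 2 * y * (∑ m ∈ s, c m * g m a)) μ :=
    hS2.sub (hS1.const_mul (2 * y))
  simp_rw [key]
  rw [integral_add hA (integrable_const _),
    integral_sub hS2 (hS1.const_mul (2 * y)), integral_const_mul, integral_const]
  have e1 : ∫ a, (∑ m ∈ s, c m * g m a) ^ 2 ∂μ
      = ∑ m ∈ s, ∑ n ∈ s, c m * c n * ∫ a, g m a * g n a ∂μ := by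
    rw [sum_sq_int s _ hgm]
    refine Finset.sum_congr rfl fun m hm => Finset.sum_congr rfl fun n hn => ?_
    have : (fun a => (c m * g m a) * (c n * g n a))
        = fun a => (c m * c n) * (g m a * g n a) := by
      funext a; ring
    rw [this, integral_const_mul, mul_assoc]
  have e2 : ∫ a, ∑ m ∈ s, c m * g m a ∂μ = ∑ m ∈ s, c m * ∫ a, g m a ∂μ := by
    rw [integral_finset_sum s (fun m hm => (hgm m hm).integrable one_le_two)]
    exact Finset.sum_congr rfl fun m hm => integral_const_mul _ _
  rw [e1, e2]
  simp

private lemma expand_sq_int0 {α : Type*} {mα : MeasurableSpace α} (μ : Measure α)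
    [IsProbabilityMeasure μ] (s : Finset ℕ) (g : ℕ → α → ℝ)
    (hg : ∀ m ∈ s, MemLp (g m) 2 μ) (c : ℕ → ℝ) :
    ∫ a, (∑ m ∈ s, c m * g m a) ^ 2 ∂μ
      = ∑ m ∈ s, ∑ n ∈ s, c m * c n * ∫ a, g m a * g n a ∂μ := by
  have h := expand_sq_int μ s g hg c 0
  simpa using h

private lemma per_x
    {Ωp Ωw : Type*} [MeasurableSpace Ωp] [MeasurableSpace Ωw]
    (Pp : Measure Ωp) (Pw : Measure Ωw)
    [IsProbabilityMeasure Pp] [IsProbabilityMeasure Pw]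
    (μ : Measure ℝ) [IsProbabilityMeasure μ]
    (hmom2 : Integrable (fun y => y ^ 2) μ)
    (s : Finset ℕ) (p v w : ℕ → ℝ)
    (phat : ℕ → Ωp → ℝ) (what : ℕ → Ωw → ℝ)
    (hpL2 : ∀ m ∈ s, MemLp (phat m) 2 Pp)
    (hwL2 : ∀ m ∈ s, MemLp (what m) 2 Pw)
    (hpu : ∀ m ∈ s, ∫ ωp, phat m ωp ∂Pp = p m)
    (hwu : ∀ m ∈ s, ∫ ωw, what m ωw ∂Pw = w m)
    (hmatch : ∑ m ∈ s, p m * v m = ∫ y, y ∂μ) :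
    (∫ y, ∫ ωp, ∫ ωw, ((∑ m ∈ s, phat m ωp * what m ωw) - y) ^ 2 ∂Pw ∂Pp ∂μ)
      = (∫ ωp, ∫ ωw, (∑ m ∈ s, (phat m ωp - p m) * what m ωw) ^ 2 ∂Pw ∂Pp)
        + (∫ ωw, (∑ m ∈ s, p m * (what m ωw - w m)) ^ 2 ∂Pw)
        + (∑ m ∈ s, p m * (w m - v m)) ^ 2
        + (∫ y, ((∑ m ∈ s, p m * v m) - y) ^ 2 ∂μ) := by
  -- basic integrability facts
  have hpInt : ∀ m ∈ s, Integrable (phat m) Pp :=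
    fun m hm => (hpL2 m hm).integrable one_le_two
  have hwInt : ∀ m ∈ s, Integrable (what m) Pw :=
    fun m hm => (hwL2 m hm).integrable one_le_two
  have hyL2 : MemLp (fun y : ℝ => y) 2 μ :=
    (memLp_two_iff_integrable_sq (f := fun y : ℝ => y)
      aestronglyMeasurable_id).2 hmom2
  have hyInt : Integrable (fun y : ℝ => y) μ := hyL2.integrable one_le_two
  -- step 1 : innermost integral over ωw
  have inner : ∀ (y : ℝ) (ωp : Ωp),
      ∫ ωw, ((∑ m ∈ s, phat m ωp * what m ωw) - y) ^ 2 ∂Pw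
        = (∑ m ∈ s, ∑ n ∈ s,
            phat m ωp * phat n ωp * ∫ ωw, what m ωw * what n ωw ∂Pw)
          - 2 * y * (∑ m ∈ s, phat m ωp * w m) + y ^ 2 := by
    intro y ωp
    rw [expand_sq_int Pw s what hwL2 (fun m => phat m ωp) y]
    have e : ∑ m ∈ s, phat m ωp * ∫ a, what m a ∂Pw
        = ∑ m ∈ s, phat m ωp * w m :=
      Finset.sum_congr rfl fun m hm => by rw [hwu m hm]
    rw [e]
  -- step 2 : middle integral over ωp
  have mid : ∀ y : ℝ,
      ∫ ωp, ∫ ωw, ((∑ m ∈ s, phat m ωp * what m ωw) - y) ^ 2 ∂Pw ∂Pp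
        = (∑ m ∈ s, ∑ n ∈ s,
            (∫ ωp, phat m ωp * phat n ωp ∂Pp) * ∫ ωw, what m ωw * what n ωw ∂Pw)
          - 2 * y * (∑ m ∈ s, p m * w m) + y ^ 2 := by
    intro y
    simp_rw [inner y]
    have IA : Integrable (fun ωp => ∑ m ∈ s, ∑ n ∈ s,
        phat m ωp * phat n ωp * ∫ ωw, what m ωw * what n ωw ∂Pw) Pp :=
      integrable_finset_sum s fun m hm => integrable_finset_sum s fun n hn =>
        (mul_int (hpL2 m hm) (hpL2 n hn)).mul_const _
    have IB : Integrable (fun ωp => ∑ m ∈ s, phat m ωp * w m) Pp :=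
      integrable_finset_sum s fun m hm => (hpInt m hm).mul_const _
    have IB2 : Integrable
        (fun ωp => 2 * y * (∑ m ∈ s, phat m ωp * w m)) Pp := IB.const_mul _
    have hsub : Integrable (fun ωp =>
        (∑ m ∈ s, ∑ n ∈ s,
          phat m ωp * phat n ωp * ∫ ωw, what m ωw * what n ωw ∂Pw)
        - 2 * y * (∑ m ∈ s, phat m ωp * w m)) Pp := IA.sub IB2
    rw [integral_add hsub (integrable_const _), integral_sub IA IB2,
      integral_const_mul, integral_const]
    have eA : ∫ ωp, ∑ m ∈ s, ∑ n ∈ s,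
        phat m ωp * phat n ωp * ∫ ωw, what m ωw * what n ωw ∂Pw ∂Pp
        = ∑ m ∈ s, ∑ n ∈ s,
            (∫ ωp, phat m ωp * phat n ωp ∂Pp) * ∫ ωw, what m ωw * what n ωw ∂Pw := by
      rw [integral_finset_sum s fun m hm => integrable_finset_sum s fun n hn =>
        (mul_int (hpL2 m hm) (hpL2 n hn)).mul_const _]
      refine Finset.sum_congr rfl fun m hm => ?_
      rw [integral_finset_sum s fun n hn =>
        (mul_int (hpL2 m hm) (hpL2 n hn)).mul_const _]
      exact Finset.sum_congr rfl fun n hn => integral_mul_const _ _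
    have eB : ∫ ωp, ∑ m ∈ s, phat m ωp * w m ∂Pp = ∑ m ∈ s, p m * w m := by
      rw [integral_finset_sum s fun m hm => (hpInt m hm).mul_const _]
      exact Finset.sum_congr rfl fun m hm => by rw [integral_mul_const, hpu m hm]
    rw [eA, eB]
    simp
  -- step 3 : outer integral over y
  have hLHS :
      (∫ y, ∫ ωp, ∫ ωw,
          ((∑ m ∈ s, phat m ωp * what m ωw) - y) ^ 2 ∂Pw ∂Pp ∂μ)
        = (∑ m ∈ s, ∑ n ∈ s,
            (∫ ωp, phat m ωp * phat n ωp ∂Pp) * ∫ ωw, what m ωw * what n ωw ∂Pw)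
          - (2 * ∫ y, y ∂μ) * (∑ m ∈ s, p m * w m) + ∫ y, y ^ 2 ∂μ := by
    simp_rw [mid]
    have c2 : Integrable (fun y : ℝ =>
        2 * y * (∑ m ∈ s, p m * w m)) μ := (hyInt.const_mul 2).mul_const _
    have c1 : Integrable (fun y : ℝ =>
        (∑ m ∈ s, ∑ n ∈ s,
          (∫ ωp, phat m ωp * phat n ωp ∂Pp) * ∫ ωw, what m ωw * what n ωw ∂Pw)
        - 2 * y * (∑ m ∈ s, p m * w m)) μ := (integrable_const _).sub c2
    rw [integral_add c1 hmom2, integral_sub (integrable_const _) c2,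
      integral_const, integral_mul_const, integral_const_mul]
    simp
  -- step 4 : V_p
  have hVp :
      (∫ ωp, ∫ ωw, (∑ m ∈ s, (phat m ωp - p m) * what m ωw) ^ 2 ∂Pw ∂Pp)
        = ∑ m ∈ s, ∑ n ∈ s,
            ((∫ ωp, phat m ωp * phat n ωp ∂Pp) - p m * p n)
              * ∫ ωw, what m ωw * what n ωw ∂Pw := by
    have inner2 : ∀ ωp : Ωp,
        ∫ ωw, (∑ m ∈ s, (phat m ωp - p m) * what m ωw) ^ 2 ∂Pw
          = ∑ m ∈ s, ∑ n ∈ s, (phat m ωp - p m) * (phat n ωp - p n)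
              * ∫ ωw, what m ωw * what n ωw ∂Pw :=
      fun ωp => expand_sq_int0 Pw s what hwL2 (fun m => phat m ωp - p m)
    simp_rw [inner2]
    have hInt : ∀ m ∈ s, ∀ n ∈ s, Integrable
        (fun ωp => (phat m ωp - p m) * (phat n ωp - p n)) Pp :=
      fun m hm n hn => mul_int ((hpL2 m hm).sub (memLp_const _))
        ((hpL2 n hn).sub (memLp_const _))
    rw [integral_finset_sum s fun m hm => integrable_finset_sum s fun n hn =>
      (hInt m hm n hn).mul_const _]
    refine Finset.sum_congr rfl fun m hm => ?_
    rw [integral_finset_sum s fun n hn => (hInt m hm n hn).mul_const _]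
    refine Finset.sum_congr rfl fun n hn => ?_
    rw [integral_mul_const]
    congr 1
    have key : ∀ ωp, (phat m ωp - p m) * (phat n ωp - p n)
        = ((phat m ωp * phat n ωp - p m * phat n ωp) - p n * phat m ωp)
          + p m * p n := fun ωp => by ring
    simp_rw [key]
    have i1 : Integrable (fun a => phat m a * phat n a) Pp :=
      mul_int (hpL2 m hm) (hpL2 n hn)
    have i2 : Integrable (fun a => p m * phat n a) Pp := (hpInt n hn).const_mul _
    have i3 : Integrable (fun a => p n * phat m a) Pp := (hpInt m hm).const_mul _
    have i12 : Integrable (fun a => phat m a * phat n a - p m * phat n a) Pp :=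
      i1.sub i2
    have i123 : Integrable
        (fun a => phat m a * phat n a - p m * phat n a - p n * phat m a) Pp :=
      i12.sub i3
    rw [integral_add i123 (integrable_const _), integral_sub i12 i3,
      integral_sub i1 i2, integral_const_mul, integral_const_mul, integral_const,
      hpu m hm, hpu n hn]
    simp; ring
  -- step 5 : V_w
  have hVw :
      (∫ ωw, (∑ m ∈ s, p m * (what m ωw - w m)) ^ 2 ∂Pw)
        = ∑ m ∈ s, ∑ n ∈ s, p m * p n
            * ((∫ ωw, what m ωw * what n ωw ∂Pw) - w m * w n) := by
    have hg : ∀ m ∈ s, MemLp (fun ωw => what m ωw - w m) 2 Pw :=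
      fun m hm => (hwL2 m hm).sub (memLp_const _)
    rw [expand_sq_int0 Pw s _ hg p]
    refine Finset.sum_congr rfl fun m hm => Finset.sum_congr rfl fun n hn => ?_
    congr 1
    have key : ∀ ωw, (what m ωw - w m) * (what n ωw - w n)
        = ((what m ωw * what n ωw - w m * what n ωw) - w n * what m ωw)
          + w m * w n := fun ωw => by ring
    simp_rw [key]
    have i1 : Integrable (fun a => what m a * what n a) Pw :=
      mul_int (hwL2 m hm) (hwL2 n hn)
    have i2 : Integrable (fun a => w m * what n a) Pw := (hwInt n hn).const_mul _
    have i3 : Integrable (fun a => w n * what m a) Pw := (hwInt m hm).const_mul _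
    have i12 : Integrable (fun a => what m a * what n a - w m * what n a) Pw :=
      i1.sub i2
    have i123 : Integrable
        (fun a => what m a * what n a - w m * what n a - w n * what m a) Pw :=
      i12.sub i3
    rw [integral_add i123 (integrable_const _), integral_sub i12 i3,
      integral_sub i1 i2, integral_const_mul, integral_const_mul, integral_const,
      hwu m hm, hwu n hn]
    simp; ring
  -- step 6 : V_y
  have hVy :
      (∫ y, ((∑ m ∈ s, p m * v m) - y) ^ 2 ∂μ)
        = (∑ m ∈ s, p m * v m) ^ 2
          - (2 * ∫ y, y ∂μ) * (∑ m ∈ s, p m * v m) + ∫ y, y ^ 2 ∂μ := by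
    have key : ∀ y : ℝ, ((∑ m ∈ s, p m * v m) - y) ^ 2
        = ((∑ m ∈ s, p m * v m) ^ 2
            - 2 * (∑ m ∈ s, p m * v m) * y) + y ^ 2 := fun y => by ring
    simp_rw [key]
    have i2 : Integrable (fun y : ℝ => (2 * ∑ m ∈ s, p m * v m) * y) μ :=
      hyInt.const_mul _
    have i1 : Integrable (fun y : ℝ =>
        (∑ m ∈ s, p m * v m) ^ 2 - (2 * ∑ m ∈ s, p m * v m) * y) μ :=
      (integrable_const _).sub i2
    rw [integral_add i1 hmom2, integral_sub (integrable_const _) i2,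
      integral_const_mul, integral_const]
    simp; ring
  -- step 7 : combine
  rw [hLHS, hVp, hVw, hVy]
  have hVb : (∑ m ∈ s, p m * (w m - v m))
      = (∑ m ∈ s, p m * w m) - (∑ m ∈ s, p m * v m) := by
    simp [mul_sub, Finset.sum_sub_distrib]
  rw [hVb]
  have hcomb :
      (∑ m ∈ s, ∑ n ∈ s,
        ((∫ ωp, phat m ωp * phat n ωp ∂Pp) - p m * p n)
          * ∫ ωw, what m ωw * what n ωw ∂Pw)
      + (∑ m ∈ s, ∑ n ∈ s, p m * p n
          * ((∫ ωw, what m ωw * what n ωw ∂Pw) - w m * w n))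
      = (∑ m ∈ s, ∑ n ∈ s,
          (∫ ωp, phat m ωp * phat n ωp ∂Pp) * ∫ ωw, what m ωw * what n ωw ∂Pw)
        - (∑ m ∈ s, p m * w m) ^ 2 := by
    rw [← Finset.sum_add_distrib]
    have e : ∀ m ∈ s,
        (∑ n ∈ s, ((∫ ωp, phat m ωp * phat n ωp ∂Pp) - p m * p n)
            * ∫ ωw, what m ωw * what n ωw ∂Pw)
        + (∑ n ∈ s, p m * p n
            * ((∫ ωw, what m ωw * what n ωw ∂Pw) - w m * w n))
        = ∑ n ∈ s,
            ((∫ ωp, phat m ωp * phat n ωp ∂Pp)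
              * (∫ ωw, what m ωw * what n ωw ∂Pw)
            - (p m * w m) * (p n * w n)) := by
      intro m hm
      rw [← Finset.sum_add_distrib]
      exact Finset.sum_congr rfl fun n hn => by ring
    rw [Finset.sum_congr rfl e]
    have hsq : (∑ m ∈ s, p m * w m) ^ 2
        = ∑ m ∈ s, ∑ n ∈ s, (p m * w m) * (p n * w n) := by
      rw [sq, Finset.sum_mul_sum]
    rw [hsq, ← Finset.sum_sub_distrib]
    exact Finset.sum_congr rfl fun m hm => by rw [Finset.sum_sub_distrib]
  rw [hcomb, ← hmatch]
  ring


/-- Error decomposition for classification–restoration prediction (Lemma 1):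
for a finite nonempty input set `X` with probability weights `q`, conditional watch-time
laws `ν x` (Borel probability measures on `ℝ` with finite second moment), bucket
probabilities `p m x ∈ [0,1]` and conditional bucket means `v m x` with population
averages `w m = ∑ x, q x * v m x`, and unbiased square-integrable estimators
`p̂ m x : Ω_p → ℝ` and `ŵ m : Ω_w → ℝ` on probability spaces `(Ω_p, 𝒫_p)` and
`(Ω_w, 𝒫_w)`, if `∑ m, p m x * v m x = ∫ y dν_x(y)` for every `x`, then the mean
squared error of the prediction `ŷ = ∑ m, p̂ m x * ŵ m` decomposes exactly as
`E[(ŷ − y)²] = V_p + V_w + V_b + V_y`, the expectation being over the product measure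
`(∑_x q x δ_x ⊗ ν_x) ⊗ 𝒫_p ⊗ 𝒫_w` (written here via sums over `x` and iterated
integrals). -/
theorem error_decomposition
    {X : Type*} [Fintype X] [Nonempty X]
    (M : ℕ) (hM : 1 ≤ M)
    (q : X → ℝ) (hq0 : ∀ x, 0 ≤ q x) (hq1 : ∀ x, q x ≤ 1)
    (hqsum : ∑ x, q x = 1)
    (ν : X → Measure ℝ) (hν : ∀ x, IsProbabilityMeasure (ν x))
    (hmom2 : ∀ x, Integrable (fun y => y ^ 2) (ν x))
    (p : ℕ → X → ℝ) (hp0 : ∀ m x, 0 ≤ p m x) (hp1 : ∀ m x, p m x ≤ 1)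
    (v : ℕ → X → ℝ)
    (w : ℕ → ℝ) (hw : ∀ m ∈ Finset.Icc 1 M, w m = ∑ x, q x * v m x)
    {Ωp Ωw : Type*} [MeasurableSpace Ωp] [MeasurableSpace Ωw]
    (Pp : Measure Ωp) (Pw : Measure Ωw)
    [IsProbabilityMeasure Pp] [IsProbabilityMeasure Pw]
    (phat : ℕ → X → Ωp → ℝ) (what : ℕ → Ωw → ℝ)
    (hphatL2 : ∀ m ∈ Finset.Icc 1 M, ∀ x, MemLp (phat m x) 2 Pp)
    (hwhatL2 : ∀ m ∈ Finset.Icc 1 M, MemLp (what m) 2 Pw)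
    (hphat_unbiased : ∀ m ∈ Finset.Icc 1 M, ∀ x, ∫ ωp, phat m x ωp ∂Pp = p m x)
    (hwhat_unbiased : ∀ m ∈ Finset.Icc 1 M, ∫ ωw, what m ωw ∂Pw = w m)
    (hmatch : ∀ x, ∑ m ∈ Finset.Icc 1 M, p m x * v m x = ∫ y, y ∂(ν x)) :
    -- E[(ŷ − y)²]
    (∑ x, q x * ∫ y, ∫ ωp, ∫ ωw,
        ((∑ m ∈ Finset.Icc 1 M, phat m x ωp * what m ωw) - y) ^ 2 ∂Pw ∂Pp ∂(ν x))
      = -- V_p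
        (∑ x, q x * ∫ ωp, ∫ ωw,
            (∑ m ∈ Finset.Icc 1 M, (phat m x ωp - p m x) * what m ωw) ^ 2 ∂Pw ∂Pp)
      + -- V_w
        (∑ x, q x * ∫ ωw,
            (∑ m ∈ Finset.Icc 1 M, p m x * (what m ωw - w m)) ^ 2 ∂Pw)
      + -- V_b
        (∑ x, q x * (∑ m ∈ Finset.Icc 1 M, p m x * (w m - v m x)) ^ 2)
      + -- V_y
        (∑ x, q x * ∫ y, ((∑ m ∈ Finset.Icc 1 M, p m x * v m x) - y) ^ 2 ∂(ν x)) := by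
  have key : ∀ x : X,
      (∫ y, ∫ ωp, ∫ ωw,
        ((∑ m ∈ Finset.Icc 1 M, phat m x ωp * what m ωw) - y) ^ 2 ∂Pw ∂Pp ∂(ν x))
      = (∫ ωp, ∫ ωw,
            (∑ m ∈ Finset.Icc 1 M, (phat m x ωp - p m x) * what m ωw) ^ 2 ∂Pw ∂Pp)
        + (∫ ωw, (∑ m ∈ Finset.Icc 1 M, p m x * (what m ωw - w m)) ^ 2 ∂Pw)
        + (∑ m ∈ Finset.Icc 1 M, p m x * (w m - v m x)) ^ 2
        + (∫ y, ((∑ m ∈ Finset.Icc 1 M, p m x * v m x) - y) ^ 2 ∂(ν x)) := by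
    intro x
    haveI := hν x
    exact per_x Pp Pw (ν x) (hmom2 x) (Finset.Icc 1 M)
      (fun m => p m x) (fun m => v m x) w (fun m => phat m x) what
      (fun m hm => hphatL2 m hm x) hwhatL2
      (fun m hm => hphat_unbiased m hm x) hwhat_unbiased (hmatch x)
  calc (∑ x, q x * ∫ y, ∫ ωp, ∫ ωw,
        ((∑ m ∈ Finset.Icc 1 M, phat m x ωp * what m ωw) - y) ^ 2 ∂Pw ∂Pp ∂(ν x))
      = ∑ x, ((q x * ∫ ωp, ∫ ωw,
            (∑ m ∈ Finset.Icc 1 M, (phat m x ωp - p m x) * what m ωw) ^ 2 ∂Pw ∂Pp)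
        + (q x * ∫ ωw, (∑ m ∈ Finset.Icc 1 M, p m x * (what m ωw - w m)) ^ 2 ∂Pw)
        + (q x * (∑ m ∈ Finset.Icc 1 M, p m x * (w m - v m x)) ^ 2)
        + (q x * ∫ y, ((∑ m ∈ Finset.Icc 1 M, p m x * v m x) - y) ^ 2 ∂(ν x))) := by
        refine Finset.sum_congr rfl fun x _ => ?_
        rw [key x]; ring
    _ = _ := by
        rw [Finset.sum_add_distrib, Finset.sum_add_distrib, Finset.sum_add_distrib]
end

section
/- Bound on the probability-learning error V_p (first bound of Theorem 1, intermediate form): under the data model below, let N ≥ 1 and for each x ∈ 𝒳 let N_x ≥ 1 be integers with q(x) = N_x / N. Suppose p̂_m(x) : Ω_p → ℝ are square-integrable random variables on a probability space (Ω_p, 𝒫_p) satisfying E[(p̂_m(x) − p_m(x))²] ≤ p_m(x)/N_x for every m, x, and ŵ_m : Ω_w → ℝ are random variables on a probability space (Ω_w, 𝒫_w) satisfying |ŵ_m(ω)| ≤ t_m for all ω and all m. Then V_p := E[(Σ_{m=1}^M (p̂_m(x) − p_m(x)) ŵ_m)²] ≤ (M/N) · Σ_{m=1}^M t_m² Σ_{x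 ∈ 𝒳} p_m(x), where the expectation is over x drawn with weights q, ω_p ~ 𝒫_p, and ω_w ~ 𝒫_w independently. -/
open MeasureTheory

/-- Bound on the probability-learning error `V_p` (first bound of Theorem 1,
intermediate form): with thresholds `0 = t 0 < t 1 < … < t M`, a finite nonempty input
set `X` with probability weights `q x = N_x / N` (`N ≥ 1`, `N_x ≥ 1` integers), bucket
probabilities `p m x ∈ [0,1]`, square-integrable estimators `p̂ m x` on `(Ω_p, 𝒫_p)`
with `E[(p̂ m x − p m x)²] ≤ p m x / N_x`, and estimators `ŵ m` on `(Ω_w, 𝒫_w)` with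
`|ŵ m ω| ≤ t m` everywhere, the error
`V_p = E[(∑_{m=1}^M (p̂ m x − p m x) ŵ m)²]` (expectation over `x ∼ q`,
`ω_p ∼ 𝒫_p`, `ω_w ∼ 𝒫_w` independently) is at most
`(M/N) * ∑_{m=1}^M (t m)² * ∑_x p m x`. -/
theorem probability_learning_error_bound
    {X : Type*} [Fintype X] [Nonempty X]
    (M : ℕ) (hM : 1 ≤ M) (Tmax : ℝ) (t : ℕ → ℝ)
    (ht0 : t 0 = 0) (htM : t M = Tmax)
    (htmono : ∀ m < M, t m < t (m + 1))
    (N : ℕ) (hN : 1 ≤ N) (Nx : X → ℕ) (hNx : ∀ x, 1 ≤ Nx x)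
    (q : X → ℝ) (hq : ∀ x, q x = (Nx x : ℝ) / N)
    (hqsum : ∑ x, q x = 1)
    (p : ℕ → X → ℝ) (hp0 : ∀ m x, 0 ≤ p m x) (hp1 : ∀ m x, p m x ≤ 1)
    {Ωp Ωw : Type*} [MeasurableSpace Ωp] [MeasurableSpace Ωw]
    (Pp : Measure Ωp) (Pw : Measure Ωw)
    [IsProbabilityMeasure Pp] [IsProbabilityMeasure Pw]
    (phat : ℕ → X → Ωp → ℝ) (what : ℕ → Ωw → ℝ)
    (hphatL2 : ∀ m ∈ Finset.Icc 1 M, ∀ x, MemLp (phat m x) 2 Pp)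
    (hwhat_meas : ∀ m ∈ Finset.Icc 1 M, Measurable (what m))
    (hmse : ∀ m ∈ Finset.Icc 1 M, ∀ x,
      ∫ ωp, (phat m x ωp - p m x) ^ 2 ∂Pp ≤ p m x / Nx x)
    (hwbound : ∀ m ∈ Finset.Icc 1 M, ∀ ωw, |what m ωw| ≤ t m) :
    ∑ x, q x * ∫ ωp, ∫ ωw,
        (∑ m ∈ Finset.Icc 1 M, (phat m x ωp - p m x) * what m ωw) ^ 2 ∂Pw ∂Pp
      ≤ ((M : ℝ) / N) * ∑ m ∈ Finset.Icc 1 M, (t m) ^ 2 * ∑ x, p m x := by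
  set S := Finset.Icc 1 M with hS
  have hcard : (S.card : ℝ) = M := by simp [hS]
  -- key per-x bound
  have key : ∀ x, (∫ ωp, ∫ ωw,
      (∑ m ∈ S, (phat m x ωp - p m x) * what m ωw) ^ 2 ∂Pw ∂Pp)
      ≤ (M : ℝ) * ∑ m ∈ S, (t m) ^ 2 * (p m x / Nx x) := by
    intro x
    -- integrability of squares
    have hsq : ∀ m ∈ S, Integrable (fun ωp => (phat m x ωp - p m x) ^ 2) Pp := by
      intro m hm
      exact ((hphatL2 m hm x).sub (memLp_const (p m x))).integrable_sq
    set g : Ωp → ℝ := fun ωp => (M : ℝ) * ∑ m ∈ S, (phat m x ωp - p m x) ^ 2 * (t m) ^ 2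
      with hg
    have hgint : Integrable g Pp := by
      apply Integrable.const_mul
      exact integrable_finset_sum _ (fun m hm => (hsq m hm).mul_const _)
    have hinner : ∀ ωp, (∫ ωw,
        (∑ m ∈ S, (phat m x ωp - p m x) * what m ωw) ^ 2 ∂Pw) ≤ g ωp := by
      intro ωp
      have hbd : ∀ ωw, (∑ m ∈ S, (phat m x ωp - p m x) * what m ωw) ^ 2 ≤ g ωp := by
        intro ωw
        calc (∑ m ∈ S, (phat m x ωp - p m x) * what m ωw) ^ 2
            ≤ (S.card : ℝ) * ∑ m ∈ S, ((phat m x ωp - p m x) * what m ωw) ^ 2 :=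
              sq_sum_le_card_mul_sum_sq
          _ ≤ (M : ℝ) * ∑ m ∈ S, (phat m x ωp - p m x) ^ 2 * (t m) ^ 2 := by
              rw [hcard]
              apply mul_le_mul_of_nonneg_left _ (by positivity)
              apply Finset.sum_le_sum
              intro m hm
              rw [mul_pow]
              apply mul_le_mul_of_nonneg_left _ (sq_nonneg _)
              calc (what m ωw) ^ 2 = |what m ωw| ^ 2 := (sq_abs _).symm
                _ ≤ (t m) ^ 2 := by
                    have := hwbound m hm ωw
                    have habs : (0:ℝ) ≤ |what m ωw| := abs_nonneg _
                    nlinarith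
      calc (∫ ωw, (∑ m ∈ S, (phat m x ωp - p m x) * what m ωw) ^ 2 ∂Pw)
          ≤ ∫ _ωw, g ωp ∂Pw := by
            apply integral_mono_of_nonneg
            · exact Filter.Eventually.of_forall fun ωw => sq_nonneg _
            · exact integrable_const _
            · exact Filter.Eventually.of_forall hbd
        _ = g ωp := by simp
    calc (∫ ωp, ∫ ωw,
        (∑ m ∈ S, (phat m x ωp - p m x) * what m ωw) ^ 2 ∂Pw ∂Pp)
        ≤ ∫ ωp, g ωp ∂Pp := by
          apply integral_mono_of_nonneg
          · exact Filter.Eventually.of_forall fun ωp =>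
              integral_nonneg fun ωw => sq_nonneg _
          · exact hgint
          · exact Filter.Eventually.of_forall hinner
      _ = (M : ℝ) * ∑ m ∈ S, (∫ ωp, (phat m x ωp - p m x) ^ 2 ∂Pp) * (t m) ^ 2 := by
          rw [hg]
          rw [integral_const_mul]
          rw [integral_finset_sum _ (fun m hm => (hsq m hm).mul_const _)]
          congr 1
          exact Finset.sum_congr rfl fun m _ => integral_mul_const _ _
      _ ≤ (M : ℝ) * ∑ m ∈ S, (t m) ^ 2 * (p m x / Nx x) := by
          apply mul_le_mul_of_nonneg_left _ (by positivity)
          apply Finset.sum_le_sum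
          intro m hm
          rw [mul_comm ((t m) ^ 2)]
          exact mul_le_mul_of_nonneg_right (hmse m hm x) (sq_nonneg _)
  -- combine
  have hq0 : ∀ x, 0 ≤ q x := fun x => by
    rw [hq x]; positivity
  calc (∑ x, q x * ∫ ωp, ∫ ωw,
      (∑ m ∈ S, (phat m x ωp - p m x) * what m ωw) ^ 2 ∂Pw ∂Pp)
      ≤ ∑ x, q x * ((M : ℝ) * ∑ m ∈ S, (t m) ^ 2 * (p m x / Nx x)) :=
        Finset.sum_le_sum fun x _ => mul_le_mul_of_nonneg_left (key x) (hq0 x)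
    _ = ((M : ℝ) / N) * ∑ m ∈ S, (t m) ^ 2 * ∑ x, p m x := by
        rw [Finset.mul_sum]
        simp only [Finset.mul_sum]
        rw [Finset.sum_comm]
        apply Finset.sum_congr rfl
        intro m _
        apply Finset.sum_congr rfl
        intro x _
        have hNxne : (Nx x : ℝ) ≠ 0 := by
          have := hNx x; positivity
        have hNne : (N : ℝ) ≠ 0 := by positivity
        rw [hq x]
        field_simp
end
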